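/- Let D be a real m×n matrix with full SVD D = U Σ Vᵀ, where U is m×m orthogonal, V is n×n orthogonal, and Σ is m×n with diagonal entries σ₁ ≥ σ₂ ≥ … ≥ σ_q ≥ 0 (q = min(m,n)), all σᵢ > 0 for i ≤ k. Let λ > 0 and let 1 ≤ k ≤ q. Let U_k (resp. V_k) consist of the first k columns of U (resp. V), let Σ_k be the k×k diagonal matrix of σ₁,…,σ_k, and set D₀ = U_k Σ_k V_kᵀ and C* = V_k V_kᵀ. Then the pair (C*, D₀) is feasible, i.e., D₀ = D₀ C*, and its PCE objective value equals (1/2) k + (λ/2) Σᵢ₌ₖ₊₁^q σᵢ². -/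

import Mathlib

open Matrix

/-- The Frobenius norm of a real matrix: ‖M‖_F = sqrt(trace(M Mᵀ)). -/
noncomputable def frobeniusNorm {m n : ℕ} (M : Matrix (Fin m) (Fin n) ℝ) : ℝ :=
  Real.sqrt (Matrix.trace (M * Mᵀ))

lemma trace_mul_transpose_eq {m n : ℕ} (M : Matrix (Fin m) (Fin n) ℝ) :
    Matrix.trace (M * Mᵀ) = ∑ i, ∑ j, (M i j)^2 := by
  simp [Matrix.trace, Matrix.mul_apply, Matrix.diag, sq]

lemma frob_sq {m n : ℕ} (M : Matrix (Fin m) (Fin n) ℝ) :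
    frobeniusNorm M ^ 2 = Matrix.trace (M * Mᵀ) := by
  rw [frobeniusNorm, Real.sq_sqrt]
  rw [trace_mul_transpose_eq]
  positivity

lemma sum_fin_ite {n k : ℕ} (hkn : k ≤ n) (f : ℕ → ℝ) :
    ∑ j : Fin n, (if (j:ℕ) < k then f j else 0) = ∑ j : Fin k, f j := by
  rw [Fin.sum_univ_eq_sum_range (fun j => if j < k then f j else 0),
    Fin.sum_univ_eq_sum_range f, ← Finset.sum_filter]
  congr 1
  ext x; simp; omega

/-- Let D = U Σ Vᵀ be a full SVD of a real m×n matrix D with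
singular values σ₁ ≥ … ≥ σ_q ≥ 0 (q = min(m,n)), with σᵢ > 0 for i ≤ k, let
λ > 0 and 1 ≤ k ≤ q. With U_k, V_k the first k columns of U, V, Σ_k the k×k
diagonal matrix of σ₁,…,σ_k, D₀ = U_k Σ_k V_kᵀ and C* = V_k V_kᵀ, the pair
(C*, D₀) is feasible (D₀ = D₀ C*) and its PCE objective value equals
(1/2) k + (λ/2) Σ_{i=k+1}^{q} σᵢ². -/
theorem stmt_11 {m n k : ℕ}
    (D : Matrix (Fin m) (Fin n) ℝ)
    (U : Matrix (Fin m) (Fin m) ℝ) (Sig : Matrix (Fin m) (Fin n) ℝ)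
    (V : Matrix (Fin n) (Fin n) ℝ)
    (σ : Fin (min m n) → ℝ)
    (hSVD : D = U * Sig * Vᵀ)
    (hU : Uᵀ * U = 1) (hV : Vᵀ * V = 1)
    (hSigdiag : ∀ (i : Fin m) (j : Fin n), (i : ℕ) ≠ (j : ℕ) → Sig i j = 0)
    (hσ : ∀ i : Fin (min m n),
      σ i = Sig ⟨i, lt_of_lt_of_le i.isLt (min_le_left m n)⟩
              ⟨i, lt_of_lt_of_le i.isLt (min_le_right m n)⟩)
    (hdesc : ∀ i j : Fin (min m n), i ≤ j → σ j ≤ σ i)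
    (hnonneg : ∀ i : Fin (min m n), 0 ≤ σ i)
    (lam : ℝ) (hlam : 0 < lam)
    (hk1 : 1 ≤ k) (hk : k ≤ min m n)
    (hpos : ∀ i : Fin (min m n), (i : ℕ) < k → 0 < σ i)
    (Uk : Matrix (Fin m) (Fin k) ℝ)
    (hUk : ∀ (i : Fin m) (j : Fin k),
      Uk i j = U i ⟨j, lt_of_lt_of_le j.isLt (le_trans hk (min_le_left m n))⟩)
    (Vk : Matrix (Fin n) (Fin k) ℝ)
    (hVk : ∀ (i : Fin n) (j : Fin k),
      Vk i j = V i ⟨j, lt_of_lt_of_le j.isLt (le_trans hk (min_le_right m n))⟩)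
    (Sk : Matrix (Fin k) (Fin k) ℝ)
    (hSk : Sk = Matrix.diagonal (fun i : Fin k => σ ⟨i, lt_of_lt_of_le i.isLt hk⟩))
    (D₀ : Matrix (Fin m) (Fin n) ℝ) (Cstar : Matrix (Fin n) (Fin n) ℝ)
    (hD₀ : D₀ = Uk * Sk * Vkᵀ) (hCstar : Cstar = Vk * Vkᵀ) :
    D₀ = D₀ * Cstar ∧
      (1 / 2) * (frobeniusNorm Cstar) ^ 2 + (lam / 2) * (frobeniusNorm (D - D₀)) ^ 2 =
        (1 / 2) * (k : ℝ) +
          (lam / 2) *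
            ∑ i ∈ Finset.univ.filter (fun i : Fin (min m n) => k ≤ (i : ℕ)), (σ i) ^ 2 := by
  have hkm : k ≤ m := hk.trans (min_le_left m n)
  have hkn : k ≤ n := hk.trans (min_le_right m n)
  have hVkVk : Vkᵀ * Vk = 1 := by
    ext i j
    have h1 := congrFun (congrFun hV ⟨(i:ℕ), i.isLt.trans_le hkn⟩) ⟨(j:ℕ), j.isLt.trans_le hkn⟩
    simp only [Matrix.mul_apply, Matrix.transpose_apply] at h1
    simp only [Matrix.mul_apply, Matrix.transpose_apply, hVk]
    rw [h1]
    simp [Matrix.one_apply, Fin.ext_iff]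
  have hfeas : D₀ = D₀ * Cstar := by
    rw [hD₀, hCstar,
      Matrix.mul_assoc (Uk * Sk) Vkᵀ (Vk * Vkᵀ), ← Matrix.mul_assoc Vkᵀ Vk Vkᵀ, hVkVk,
      Matrix.one_mul]
  have hCsq : Cstar * Cstarᵀ = Cstar := by
    rw [hCstar, Matrix.transpose_mul, Matrix.transpose_transpose,
      Matrix.mul_assoc Vk Vkᵀ (Vk * Vkᵀ), ← Matrix.mul_assoc Vkᵀ Vk Vkᵀ, hVkVk,
      Matrix.one_mul]
  have htrC : Matrix.trace Cstar = (k : ℝ) := by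
    rw [hCstar, Matrix.trace_mul_comm, hVkVk, Matrix.trace_one]
    simp
  have hfrobC : frobeniusNorm Cstar ^ 2 = (k : ℝ) := by
    rw [frob_sq, hCsq, htrC]
  set W : Matrix (Fin m) (Fin n) ℝ :=
    fun i j => if (i:ℕ) = (j:ℕ) ∧ (i:ℕ) < k then Sig i j else 0 with hWdef
  have hD₀' : D₀ = U * W * Vᵀ := by
    rw [hD₀, hSk]
    ext a b
    simp only [Matrix.mul_apply, Matrix.transpose_apply, Matrix.diagonal_apply, hUk, hVk,
      mul_ite, mul_zero, ite_mul, zero_mul, Finset.sum_ite_eq, Finset.sum_ite_eq',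
      Finset.mem_univ, if_true]
    set f : ℕ → ℝ := fun t =>
      if h : t < k then
        U a ⟨t, h.trans_le hkm⟩ * σ ⟨t, h.trans_le hk⟩ * V b ⟨t, h.trans_le hkn⟩
      else 0 with hfdef
    have hR : ∀ j : Fin n, (∑ i : Fin m, U a i * W i j) * V b j
        = if (j:ℕ) < k then f j else 0 := by
      intro j
      by_cases hj : (j:ℕ) < k
      · have hsum : ∑ i : Fin m, U a i * W i j
            = U a ⟨(j:ℕ), hj.trans_le hkm⟩ * Sig ⟨(j:ℕ), hj.trans_le hkm⟩ j := by
          rw [Finset.sum_eq_single (⟨(j:ℕ), hj.trans_le hkm⟩ : Fin m)]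
          · rw [hWdef]; simp [hj]
          · intro i _ hi
            have hne : (i:ℕ) ≠ (j:ℕ) := fun h => hi (Fin.ext h)
            rw [hWdef]; simp [hne]
          · simp
        rw [hsum, if_pos hj]
        simp only [hfdef, hj, dif_pos]
        rw [hσ ⟨(j:ℕ), hj.trans_le hk⟩]
      · rw [if_neg hj]
        have hsum : ∑ i : Fin m, U a i * W i j = 0 := by
          refine Finset.sum_eq_zero fun i _ => ?_
          rw [hWdef]
          by_cases hij : (i:ℕ) = (j:ℕ)
          · simp [hij, hj]
          · simp [hij]
        rw [hsum, zero_mul]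
    trans (∑ j : Fin n, if (j:ℕ) < k then f j else 0)
    · rw [sum_fin_ite hkn f]
      refine Finset.sum_congr rfl fun s _ => ?_
      simp only [hfdef, s.isLt, dif_pos]
    · exact Finset.sum_congr rfl fun j _ => (hR j).symm
  have hDD : D - D₀ = U * (Sig - W) * Vᵀ := by
    rw [hSVD, hD₀', Matrix.mul_sub, Matrix.sub_mul]
  have hsand : Matrix.trace ((D - D₀) * (D - D₀)ᵀ)
      = Matrix.trace ((Sig - W) * (Sig - W)ᵀ) := by
    rw [hDD]
    set A := Sig - W with hA
    rw [Matrix.transpose_mul, Matrix.transpose_mul, Matrix.transpose_transpose]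
    simp only [Matrix.mul_assoc]
    rw [← Matrix.mul_assoc Vᵀ V (Aᵀ * Uᵀ), hV, Matrix.one_mul, Matrix.trace_mul_comm]
    simp only [Matrix.mul_assoc]
    rw [hU, Matrix.mul_one]
  have hAe : ∀ (i : Fin m) (j : Fin n),
      (Sig - W) i j = if (i:ℕ) = (j:ℕ) ∧ k ≤ (i:ℕ) then Sig i j else 0 := by
    intro i j
    simp only [Matrix.sub_apply]
    simp only [hWdef]
    by_cases hij : (i:ℕ) = (j:ℕ)
    · by_cases hik : (i:ℕ) < k
      · rw [if_pos ⟨hij, hik⟩, if_neg (by omega), sub_self]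
      · rw [if_neg (by tauto), if_pos ⟨hij, by omega⟩, sub_zero]
    · rw [if_neg (by tauto), if_neg (by tauto), hSigdiag i j hij, sub_zero]
  set g : ℕ → ℝ := fun t => if h : t < min m n then σ ⟨t, h⟩ ^ 2 else 0 with hgdef
  have htrA : Matrix.trace ((Sig - W) * (Sig - W)ᵀ)
      = ∑ i ∈ Finset.univ.filter (fun i : Fin (min m n) => k ≤ (i : ℕ)), (σ i) ^ 2 := by
    rw [trace_mul_transpose_eq]
    have hinner : ∀ i : Fin m, ∑ j : Fin n, ((Sig - W) i j) ^ 2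
        = if k ≤ (i:ℕ) ∧ (i:ℕ) < n then g i else 0 := by
      intro i
      by_cases hcond : k ≤ (i:ℕ) ∧ (i:ℕ) < n
      · obtain ⟨hki, hin⟩ := hcond
        have himin : (i:ℕ) < min m n := lt_min i.isLt hin
        rw [if_pos ⟨hki, hin⟩]
        have hgv : g (i:ℕ) = σ ⟨(i:ℕ), himin⟩ ^ 2 := by
          simp only [hgdef, himin, dif_pos]
        rw [hgv, hσ ⟨(i:ℕ), himin⟩]
        rw [Finset.sum_eq_single (⟨(i:ℕ), hin⟩ : Fin n)]
        · rw [hAe, if_pos ⟨rfl, hki⟩]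
        · intro j _ hj
          have hne : (i:ℕ) ≠ (j:ℕ) := fun h => hj (Fin.ext h.symm)
          rw [hAe, if_neg (by tauto)]
          simp
        · simp
      · rw [if_neg hcond]
        refine Finset.sum_eq_zero fun j _ => ?_
        rw [hAe, if_neg]
        · simp
        · rintro ⟨heq, hki⟩
          exact hcond ⟨hki, by have := j.isLt; omega⟩
    calc ∑ i : Fin m, ∑ j : Fin n, ((Sig - W) i j) ^ 2
        = ∑ i : Fin m, (if k ≤ (i:ℕ) ∧ (i:ℕ) < n then g (i:ℕ) else 0) :=
          Finset.sum_congr rfl fun i _ => hinner i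
      _ = ∑ i ∈ Finset.range m, (if k ≤ i ∧ i < n then g i else 0) :=
          Fin.sum_univ_eq_sum_range (fun i : ℕ => if k ≤ i ∧ i < n then g i else 0) m
      _ = ∑ i ∈ Finset.range (min m n), (if k ≤ i then g i else 0) := by
          rw [← Finset.sum_filter, ← Finset.sum_filter]
          congr 1
          ext x; simp; omega
      _ = ∑ i : Fin (min m n), (if k ≤ (i:ℕ) then g (i:ℕ) else 0) :=
          (Fin.sum_univ_eq_sum_range (fun i : ℕ => if k ≤ i then g i else 0) (min m n)).symm
      _ = ∑ i : Fin (min m n), (if k ≤ (i:ℕ) then σ i ^ 2 else 0) := by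
          refine Finset.sum_congr rfl fun i _ => ?_
          simp only [hgdef, i.isLt, dif_pos]
      _ = ∑ i ∈ Finset.univ.filter (fun i : Fin (min m n) => k ≤ (i : ℕ)), (σ i) ^ 2 :=
          (Finset.sum_filter _ _).symm
  refine ⟨hfeas, ?_⟩
  rw [hfrobC, frob_sq, hsand, htrA]
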